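/- Let f : [0,∞) → (0,∞) be continuous with f(t)/(t^m e^{ht}) → 1 as t → ∞ for some m > 0, h > 0, and set ψ_a(s) = ∫_{s+a}^∞ dt/f(t) for a ∈ ℝ (integrals converge). Then for every a ∈ ℝ, lim_{s→∞} ψ_a(s)/ψ_0(s) = e^{−ha}, and the convergence is uniform for a in compact intervals. -/

import Mathlib

open MeasureTheory Filter

set_option maxHeartbeats 1000000 in
private lemma stmt14_key (f : ℝ → ℝ) (m h : ℝ) (hm : 0 < m) (hh : 0 < h)
    (hpos : ∀ t ≥ (0:ℝ), 0 < f t)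
    (hlim : Tendsto (fun t => f t / (t ^ m * Real.exp (h * t))) atTop (nhds 1))
    (A B δ : ℝ) (hδ : 0 < δ) (hδ1 : δ ≤ 1) :
    ∀ᶠ u in atTop, ∀ a ∈ Set.Icc A B,
      (1 - δ) * (Real.exp (-h * a) * (1 / f u)) ≤ 1 / f (u + a) ∧
      1 / f (u + a) ≤ (1 + δ) * (Real.exp (-h * a) * (1 / f u)) := by
  set η : ℝ := δ / 10 with hηdef
  have hη : 0 < η := by positivity
  have hη1 : η ≤ 1 / 10 := by rw [hηdef]; linarith
  -- ratio bounds from hlim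
  have h1 : ∀ᶠ t in atTop, |f t / (t ^ m * Real.exp (h * t)) - 1| ≤ η := by
    have := Metric.tendsto_nhds.mp hlim η hη
    filter_upwards [this] with t ht
    rw [Real.dist_eq] at ht; exact ht.le
  obtain ⟨T, hT⟩ := eventually_atTop.mp (h1.and (eventually_ge_atTop 1))
  -- h2 : u ^ m ≤ (1+η) * (u + A) ^ m eventually
  have t1A : Tendsto (fun u : ℝ => u + A) atTop atTop :=
    tendsto_atTop_add_const_right _ _ tendsto_id
  have t2A : Tendsto (fun u : ℝ => u / (u + A)) atTop (nhds 1) := by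
    have hz : Tendsto (fun u : ℝ => A / (u + A)) atTop (nhds 0) :=
      tendsto_const_nhds.div_atTop t1A
    have e : (fun u : ℝ => (1 : ℝ) - A / (u + A)) =ᶠ[atTop] fun u => u / (u + A) := by
      filter_upwards [t1A.eventually_gt_atTop 0] with u hu
      field_simp
      ring
    exact Tendsto.congr' e (by simpa using tendsto_const_nhds.sub hz)
  have t3A : Tendsto (fun u : ℝ => (u / (u + A)) ^ m) atTop (nhds 1) := by
    simpa [Real.one_rpow] using t2A.rpow_const (Or.inr hm.le)
  have h2 : ∀ᶠ u : ℝ in atTop, u ^ m ≤ (1 + η) * (u + A) ^ m := by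
    filter_upwards [t3A.eventually (eventually_le_nhds (by linarith : (1:ℝ) < 1 + η)),
      t1A.eventually_gt_atTop 0, eventually_gt_atTop (0:ℝ)] with u hle huA hu0
    rw [Real.div_rpow hu0.le huA.le] at hle
    exact (div_le_iff₀ (Real.rpow_pos_of_pos huA m)).mp hle
  -- h3 : (u + B) ^ m ≤ (1+η) * u ^ m eventually
  have t2B : Tendsto (fun u : ℝ => (u + B) / u) atTop (nhds 1) := by
    have hz : Tendsto (fun u : ℝ => B / u) atTop (nhds 0) :=
      tendsto_const_nhds.div_atTop tendsto_id
    have e : (fun u : ℝ => (1 : ℝ) + B / u) =ᶠ[atTop] fun u => (u + B) / u := by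
      filter_upwards [eventually_gt_atTop (0:ℝ)] with u hu
      field_simp
    exact Tendsto.congr' e (by simpa using tendsto_const_nhds.add hz)
  have t3B : Tendsto (fun u : ℝ => ((u + B) / u) ^ m) atTop (nhds 1) := by
    simpa [Real.one_rpow] using t2B.rpow_const (Or.inr hm.le)
  have h3 : ∀ᶠ u : ℝ in atTop, (u + B) ^ m ≤ (1 + η) * u ^ m := by
    filter_upwards [t3B.eventually (eventually_le_nhds (by linarith : (1:ℝ) < 1 + η)),
      eventually_gt_atTop (-B), eventually_gt_atTop (0:ℝ)] with u hle huB hu0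
    rw [Real.div_rpow (by linarith : (0:ℝ) ≤ u + B) hu0.le] at hle
    exact (div_le_iff₀ (Real.rpow_pos_of_pos hu0 m)).mp hle
  -- assemble
  filter_upwards [h2, h3, eventually_ge_atTop T, eventually_ge_atTop (T - A),
    eventually_ge_atTop (1:ℝ), eventually_ge_atTop (1 - A)] with u hu2 hu3 huT huTA hu1 huA1
  intro a ⟨haA, haB⟩
  have hu0 : (0:ℝ) < u := by linarith
  have huA0 : (0:ℝ) < u + A := by linarith
  have hua0 : (0:ℝ) < u + a := by linarith
  have huaT : T ≤ u + a := by linarith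
  have hfu : 0 < f u := hpos u hu0.le
  have hfua : 0 < f (u + a) := hpos (u + a) hua0.le
  have hDu : 0 < u ^ m * Real.exp (h * u) :=
    mul_pos (Real.rpow_pos_of_pos hu0 m) (Real.exp_pos _)
  have hDua : 0 < (u + a) ^ m * Real.exp (h * (u + a)) :=
    mul_pos (Real.rpow_pos_of_pos hua0 m) (Real.exp_pos _)
  obtain ⟨hbu, -⟩ := hT u huT
  obtain ⟨hbua, -⟩ := hT (u + a) huaT
  have hbu' := abs_le.mp hbu
  have hbua' := abs_le.mp hbua
  have hfu_up : f u ≤ (1 + η) * (u ^ m * Real.exp (h * u)) :=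
    (div_le_iff₀ hDu).mp (by linarith [hbu'.2])
  have hfu_lo : (1 - η) * (u ^ m * Real.exp (h * u)) ≤ f u :=
    (le_div_iff₀ hDu).mp (by linarith [hbu'.1])
  have hfua_up : f (u + a) ≤ (1 + η) * ((u + a) ^ m * Real.exp (h * (u + a))) :=
    (div_le_iff₀ hDua).mp (by linarith [hbua'.2])
  have hfua_lo : (1 - η) * ((u + a) ^ m * Real.exp (h * (u + a))) ≤ f (u + a) :=
    (le_div_iff₀ hDua).mp (by linarith [hbua'.1])
  set P := u ^ m with hPdef
  set Pa := (u + a) ^ m with hPadef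
  set E := Real.exp (h * u) with hEdef
  set Ea := Real.exp (h * (u + a)) with hEadef
  set c := Real.exp (-h * a) with hcdef
  have hPpos : 0 < P := Real.rpow_pos_of_pos hu0 m
  have hPapos : 0 < Pa := Real.rpow_pos_of_pos hua0 m
  have hEpos : 0 < E := Real.exp_pos _
  have hEapos : 0 < Ea := Real.exp_pos _
  have hcpos : 0 < c := Real.exp_pos _
  have hE : E = Ea * c := by
    rw [hEdef, hEadef, hcdef, ← Real.exp_add]
    ring_nf
  have hP : P ≤ (1 + η) * Pa := by
    refine le_trans hu2 ?_
    have : (u + A) ^ m ≤ Pa := Real.rpow_le_rpow huA0.le (by linarith) hm.le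
    nlinarith
  have hPa : Pa ≤ (1 + η) * P := by
    refine le_trans ?_ hu3
    exact Real.rpow_le_rpow hua0.le (by linarith) hm.le
  have hη' : (0:ℝ) < 1 - η := by linarith
  -- main inequality, upper: f u ≤ (1+δ) * (c * f (u+a))
  have main_up : f u ≤ (1 + δ) * (c * f (u + a)) := by
    have step : Pa * Ea ≤ f (u + a) / (1 - η) :=
      (le_div_iff₀ hη').mpr (by nlinarith [hfua_lo])
    calc f u ≤ (1 + η) * (P * E) := hfu_up
      _ ≤ (1 + η) * (((1 + η) * Pa) * E) := by gcongr
      _ = ((1 + η) * (1 + η)) * ((Pa * Ea) * c) := by rw [hE]; ring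
      _ ≤ ((1 + η) * (1 + η)) * ((f (u + a) / (1 - η)) * c) := by gcongr
      _ = (((1 + η) * (1 + η)) / (1 - η)) * (c * f (u + a)) := by ring
      _ ≤ (1 + δ) * (c * f (u + a)) := by
          refine mul_le_mul_of_nonneg_right ?_ (mul_nonneg hcpos.le hfua.le)
          rw [div_le_iff₀ hη']
          nlinarith
  -- lower: (1-δ) * (c * f (u+a)) ≤ f u
  have main_lo : (1 - δ) * (c * f (u + a)) ≤ f u := by
    calc (1 - δ) * (c * f (u + a))
        ≤ (1 - δ) * (c * ((1 + η) * (Pa * Ea))) := by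
          have h0 : (0:ℝ) ≤ 1 - δ := by linarith
          gcongr
      _ ≤ (1 - δ) * (c * ((1 + η) * (((1 + η) * P) * Ea))) := by
          have h0 : (0:ℝ) ≤ 1 - δ := by linarith
          gcongr
      _ = ((1 - δ) * (1 + η) * (1 + η)) * (P * (Ea * c)) := by ring
      _ = ((1 - δ) * (1 + η) * (1 + η)) * (P * E) := by rw [hE]
      _ ≤ (1 - η) * (P * E) := by
          refine mul_le_mul_of_nonneg_right ?_ (mul_nonneg hPpos.le hEpos.le)
          rw [hηdef]
          nlinarith [hδ, hδ1, mul_pos hδ hδ, mul_pos (mul_pos hδ hδ) hδ]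
      _ ≤ f u := hfu_lo
  constructor
  · have hgoal : ((1 - δ) * c) / f u ≤ 1 / f (u + a) := by
      rw [div_le_div_iff₀ hfu hfua]
      nlinarith
    calc (1 - δ) * (c * (1 / f u)) = ((1 - δ) * c) / f u := by ring
      _ ≤ 1 / f (u + a) := hgoal
  · have hgoal : 1 / f (u + a) ≤ ((1 + δ) * c) / f u := by
      rw [div_le_div_iff₀ hfua hfu]
      nlinarith
    calc 1 / f (u + a) ≤ ((1 + δ) * c) / f u := hgoal
      _ = (1 + δ) * (c * (1 / f u)) := by ring

set_option maxHeartbeats 1000000 in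
private lemma stmt14_unif (f : ℝ → ℝ) (m h : ℝ) (hm : 0 < m) (hh : 0 < h)
    (hpos : ∀ t ≥ (0:ℝ), 0 < f t)
    (hint : IntegrableOn (fun t => 1 / f t) (Set.Ioi 0))
    (hlim : Tendsto (fun t => f t / (t ^ m * Real.exp (h * t))) atTop (nhds 1))
    (A B : ℝ) :
    TendstoUniformlyOn
      (fun s a => (∫ t in Set.Ioi (s + a), 1 / f t) / ∫ t in Set.Ioi s, 1 / f t)
      (fun a => Real.exp (-h * a)) atTop (Set.Icc A B) := by
  rw [Metric.tendstoUniformlyOn_iff]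
  intro ε hε
  set C : ℝ := Real.exp (h * max |A| |B|) with hCdef
  have hC : 0 < C := Real.exp_pos _
  set δ : ℝ := min 1 (ε / (2 * C)) with hδdef
  have hδpos : 0 < δ := lt_min one_pos (by positivity)
  have hδ1 : δ ≤ 1 := min_le_left _ _
  obtain ⟨U, hU⟩ := eventually_atTop.mp
    (stmt14_key f m h hm hh hpos hlim A B δ hδpos hδ1)
  filter_upwards [eventually_ge_atTop (max U (max 0 (-A)))] with s hs
  have hsU : U ≤ s := le_trans (le_max_left _ _) hs
  have hs0 : (0:ℝ) ≤ s := le_trans (le_trans (le_max_left _ _) (le_max_right _ _)) hs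
  have hsA : (0:ℝ) ≤ s + A := by
    have : -A ≤ s := le_trans (le_trans (le_max_right _ _) (le_max_right _ _)) hs
    linarith
  intro a ⟨haA, haB⟩
  have hsa0 : (0:ℝ) ≤ s + a := by linarith
  have int1 : IntegrableOn (fun t => 1 / f t) (Set.Ioi s) :=
    hint.mono_set (Set.Ioi_subset_Ioi hs0)
  -- positivity of the denominator
  have hψpos : 0 < ∫ t in Set.Ioi s, 1 / f t := by
    rw [setIntegral_pos_iff_support_of_nonneg_ae ?_ int1]
    · refine lt_of_lt_of_le ?_ (measure_mono (?_ : Set.Ioi (s + 1) ⊆ _))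
      · simp [Real.volume_Ioi]
      · intro x hx
        rw [Set.mem_Ioi] at hx
        refine ⟨?_, Set.mem_Ioi.mpr (by linarith)⟩
        have : 0 < f x := hpos x (by linarith)
        simp [Function.mem_support]
        positivity
    · filter_upwards [ae_restrict_mem measurableSet_Ioi] with t ht
      rw [Set.mem_Ioi] at ht
      have : 0 < f t := hpos t (by linarith)
      positivity
  -- translation
  have mp := measurePreserving_add_right (volume : Measure ℝ) a
  have emb := (MeasurableEquiv.addRight a).measurableEmbedding
  have hpre : (· + a) ⁻¹' Set.Ioi (s + a) = Set.Ioi s := by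
    ext x
    simp only [Set.mem_preimage, Set.mem_Ioi]
    constructor <;> intro <;> linarith
  have trans : ∫ t in Set.Ioi (s + a), 1 / f t = ∫ u in Set.Ioi s, 1 / f (u + a) := by
    rw [← mp.setIntegral_preimage_emb emb (fun t => 1 / f t) (Set.Ioi (s + a)), hpre]
  have int2 : IntegrableOn (fun u => 1 / f (u + a)) (Set.Ioi s) := by
    have h' := (mp.integrableOn_comp_preimage emb
      (f := fun t => 1 / f t) (s := Set.Ioi (s + a))).mpr
      (hint.mono_set (Set.Ioi_subset_Ioi hsa0))
    rw [hpre] at h'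
    exact h'
  have hbd : ∀ u ∈ Set.Ioi s,
      (1 - δ) * (Real.exp (-h * a) * (1 / f u)) ≤ 1 / f (u + a) ∧
      1 / f (u + a) ≤ (1 + δ) * (Real.exp (-h * a) * (1 / f u)) := fun u hu =>
    hU u (le_trans hsU (le_of_lt (Set.mem_Ioi.mp hu))) a ⟨haA, haB⟩
  have hup : ∫ u in Set.Ioi s, 1 / f (u + a) ≤
      (1 + δ) * (Real.exp (-h * a) * ∫ t in Set.Ioi s, 1 / f t) := by
    have intR : IntegrableOn
        (fun u => (1 + δ) * (Real.exp (-h * a) * (1 / f u))) (Set.Ioi s) :=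
      (int1.const_mul (Real.exp (-h * a))).const_mul (1 + δ)
    calc ∫ u in Set.Ioi s, 1 / f (u + a)
        ≤ ∫ u in Set.Ioi s, (1 + δ) * (Real.exp (-h * a) * (1 / f u)) :=
          setIntegral_mono_on int2 intR measurableSet_Ioi (fun u hu => (hbd u hu).2)
      _ = (1 + δ) * (Real.exp (-h * a) * ∫ t in Set.Ioi s, 1 / f t) := by
          rw [integral_const_mul, integral_const_mul]
  have hlo : (1 - δ) * (Real.exp (-h * a) * ∫ t in Set.Ioi s, 1 / f t) ≤
      ∫ u in Set.Ioi s, 1 / f (u + a) := by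
    have intL : IntegrableOn
        (fun u => (1 - δ) * (Real.exp (-h * a) * (1 / f u))) (Set.Ioi s) :=
      (int1.const_mul (Real.exp (-h * a))).const_mul (1 - δ)
    calc (1 - δ) * (Real.exp (-h * a) * ∫ t in Set.Ioi s, 1 / f t)
        = ∫ u in Set.Ioi s, (1 - δ) * (Real.exp (-h * a) * (1 / f u)) := by
          rw [integral_const_mul, integral_const_mul]
      _ ≤ ∫ u in Set.Ioi s, 1 / f (u + a) :=
          setIntegral_mono_on intL int2 measurableSet_Ioi (fun u hu => (hbd u hu).1)
  -- conclude
  rw [Real.dist_eq]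
  have hexp : 0 < Real.exp (-h * a) := Real.exp_pos _
  have hratio_up : (∫ t in Set.Ioi (s + a), 1 / f t) / (∫ t in Set.Ioi s, 1 / f t) ≤
      (1 + δ) * Real.exp (-h * a) := by
    rw [trans, div_le_iff₀ hψpos]
    nlinarith
  have hratio_lo : (1 - δ) * Real.exp (-h * a) ≤
      (∫ t in Set.Ioi (s + a), 1 / f t) / (∫ t in Set.Ioi s, 1 / f t) := by
    rw [trans, le_div_iff₀ hψpos]
    nlinarith
  have hexpC : Real.exp (-h * a) ≤ C := by
    rw [hCdef]
    apply Real.exp_le_exp.mpr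
    have h1 : -a ≤ max |A| |B| :=
      le_trans (le_trans (neg_le_neg haA) (neg_le_abs A)) (le_max_left _ _)
    calc -h * a = h * (-a) := by ring
      _ ≤ h * max |A| |B| := mul_le_mul_of_nonneg_left h1 hh.le
  have habs : |Real.exp (-h * a) -
      (∫ t in Set.Ioi (s + a), 1 / f t) / (∫ t in Set.Ioi s, 1 / f t)| ≤
      δ * Real.exp (-h * a) := by
    rw [abs_le]
    constructor <;> nlinarith
  have hδC : δ * C ≤ ε / 2 := by
    have : δ ≤ ε / (2 * C) := min_le_right _ _
    calc δ * C ≤ (ε / (2 * C)) * C := mul_le_mul_of_nonneg_right this hC.le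
      _ = ε / 2 := by field_simp
  calc |Real.exp (-h * a) - _| ≤ δ * Real.exp (-h * a) := habs
    _ ≤ δ * C := mul_le_mul_of_nonneg_left hexpC hδpos.le
    _ ≤ ε / 2 := hδC
    _ < ε := by linarith

/-- For ψ_a(s) = ∫_{s+a}^∞ dt/f(t) with f(t)/(t^m e^{ht}) → 1, one has
ψ_a(s)/ψ_0(s) → e^{-ha}, uniformly for a in compact intervals. -/
theorem stmt14 (f : ℝ → ℝ) (m h : ℝ) (hm : 0 < m) (hh : 0 < h)
    (hf : ContinuousOn f (Set.Ici 0)) (hpos : ∀ t ≥ (0:ℝ), 0 < f t)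
    (hint : IntegrableOn (fun t => 1 / f t) (Set.Ioi 0))
    (hlim : Tendsto (fun t => f t / (t ^ m * Real.exp (h * t))) atTop (nhds 1)) :
    (∀ a : ℝ, Tendsto
      (fun s => (∫ t in Set.Ioi (s + a), 1 / f t) / ∫ t in Set.Ioi s, 1 / f t)
      atTop (nhds (Real.exp (-h * a)))) ∧
    ∀ A B : ℝ, TendstoUniformlyOn
      (fun s a => (∫ t in Set.Ioi (s + a), 1 / f t) / ∫ t in Set.Ioi s, 1 / f t)
      (fun a => Real.exp (-h * a)) atTop (Set.Icc A B) := by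
  have hu := stmt14_unif f m h hm hh hpos hint hlim
  exact ⟨fun a => (hu a a).tendsto_at ⟨le_rfl, le_rfl⟩, hu⟩
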